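/- Consider the linearized closed-loop wind-turbine/grid model written as x' = A x, where A is the 6×6 real matrix obtained by dividing each row of the right-hand side by the corresponding positive coefficient (1, 1, J_g ω_0, J_wt ω_del, C_dc, T_g). Assume κ ≥ 0 and the gain-ratio condition K_d^gsc / K_θ^gsc = K_d^msc / K_θ^msc. Then every complex eigenvalue of A has strictly negative real part. -/

import Mathlib

/-- The state matrix `A` of the linearized closed-loop wind-turbine/grid model
`x' = A x` with state `x = (ρ₁, ρ₂, ω₁, ω₂, v, P)`, obtained by dividing each
row of the right-hand side by the corresponding positive coefficient
`(1, 1, J_g ω_0, J_wt ω_del, C_dc, T_g)`. -/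
noncomputable def stateMatrix (Kdg Kdm Kθg Kθm bg bmsc Jg Jwt ω0 ωdel Cdc Tg kg κ : ℝ) :
    Matrix (Fin 6) (Fin 6) ℝ :=
  !![-(Kdg / Cdc) * bg, -(Kdg / Cdc) * bmsc, -1, 0, Kθg, 0;
     -(Kdm / Cdc) * bg, -(Kdm / Cdc) * bmsc, 0, -1, Kθm, 0;
     bg / (Jg * ω0), 0, 0, 0, 0, 1 / (Jg * ω0);
     0, bmsc / (Jwt * ωdel), 0, -κ / (Jwt * ωdel), 0, 0;
     -bg / Cdc, -bmsc / Cdc, 0, 0, 0, 0;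
     0, 0, -kg / Tg, 0, 0, -1 / Tg]

private lemma cons_val_five' {α : Type*} {m : ℕ} (x : α) (u : Fin (m + 5) → α) :
    Matrix.vecCons x u 5 =
      Matrix.vecHead (Matrix.vecTail (Matrix.vecTail (Matrix.vecTail (Matrix.vecTail u)))) := rfl


/-- **Hurwitz stability of the linearized model.** If `κ = K_ωr + K_β K_p ≥ 0`
and `K_d^gsc / K_θ^gsc = K_d^msc / K_θ^msc`, then every complex eigenvalue of
the state matrix `A` has strictly negative real part. -/
theorem state_matrix_is_hurwitz
    (bg bmsc Jg Jwt ω0 ωdel Cdc Tg kg Kθg Kθm Kdg Kdm Kωr Kβ Kp : ℝ)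
    (hbg : 0 < bg) (hbmsc : 0 < bmsc) (hJg : 0 < Jg) (hJwt : 0 < Jwt)
    (hω0 : 0 < ω0) (hωdel : 0 < ωdel) (hCdc : 0 < Cdc) (hTg : 0 < Tg)
    (hkg : 0 < kg) (hKθg : 0 < Kθg) (hKθm : 0 < Kθm)
    (hKdg : 0 < Kdg) (hKdm : 0 < Kdm)
    (hκ : 0 ≤ Kωr + Kβ * Kp)
    (hratio : Kdg / Kθg = Kdm / Kθm) :
    ∀ μ : ℂ,
      μ ∈ spectrum ℂ
        ((stateMatrix Kdg Kdm Kθg Kθm bg bmsc Jg Jwt ω0 ωdel Cdc Tg kg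
            (Kωr + Kβ * Kp)).map (Complex.ofReal ·)) →
      μ.re < 0 := by
  intro μ hμ
  set κ : ℝ := Kωr + Kβ * Kp with hκdef
  -- ratio condition in product form
  have hKK : Kdg * Kθm = Kdm * Kθg := by
    field_simp at hratio; linarith
  -- obtain eigenvector
  rw [spectrum.mem_iff, Matrix.isUnit_iff_isUnit_det, isUnit_iff_ne_zero, not_ne_iff] at hμ
  obtain ⟨x, hx0, hx⟩ := (Matrix.exists_mulVec_eq_zero_iff).mpr hμ
  rw [Matrix.sub_mulVec, Algebra.algebraMap_eq_smul_one, Matrix.smul_mulVec,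
    Matrix.one_mulVec, sub_eq_zero] at hx
  have h0 := congrFun hx.symm 0
  have h1 := congrFun hx.symm 1
  have h2 := congrFun hx.symm 2
  have h3 := congrFun hx.symm 3
  have h4 := congrFun hx.symm 4
  have h5 := congrFun hx.symm 5
  simp [stateMatrix, Matrix.mulVec, dotProduct, Fin.sum_univ_six, Matrix.map_apply,
    cons_val_five'] at h0 h1 h2 h3 h4 h5
  -- nonzero casts
  have hc : (Cdc : ℂ) ≠ 0 := Complex.ofReal_ne_zero.mpr hCdc.ne'
  have hjw : (Jg : ℂ) ≠ 0 := Complex.ofReal_ne_zero.mpr hJg.ne'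
  have hw0 : (ω0 : ℂ) ≠ 0 := Complex.ofReal_ne_zero.mpr hω0.ne'
  have hjwt : (Jwt : ℂ) ≠ 0 := Complex.ofReal_ne_zero.mpr hJwt.ne'
  have hwd : (ωdel : ℂ) ≠ 0 := Complex.ofReal_ne_zero.mpr hωdel.ne'
  have htg : (Tg : ℂ) ≠ 0 := Complex.ofReal_ne_zero.mpr hTg.ne'
  field_simp at h0 h1 h2 h3 h4 h5
  set r1 := x 0; set r2 := x 1; set w1 := x 2; set w2 := x 3; set vv := x 4; set pp := x 5
  -- cleared equations in canonical form
  have F1 : (Cdc : ℂ) * (μ * r1)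
      = -Kdg * (bg * r1 + bmsc * r2) - Cdc * w1 + Cdc * Kθg * vv := by
    apply mul_left_cancel₀ hc; linear_combination (-(Cdc : ℂ)) * h0
  have F2 : (Cdc : ℂ) * (μ * r2)
      = -Kdm * (bg * r1 + bmsc * r2) - Cdc * w2 + Cdc * Kθm * vv := by
    apply mul_left_cancel₀ hc; linear_combination (-(Cdc : ℂ)) * h1
  have F3 : (Jg : ℂ) * ω0 * (μ * w1) = bg * r1 + pp := by
    apply mul_left_cancel₀ (mul_ne_zero hjw hw0); linear_combination (-((Jg : ℂ) * ω0)) * h2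
  have F4 : (Jwt : ℂ) * ωdel * (μ * w2) = bmsc * r2 - κ * w2 := by
    linear_combination (-1 : ℂ) * h3
  have F5 : (Cdc : ℂ) * (μ * vv) = -(bg * r1 + bmsc * r2) := by
    apply mul_left_cancel₀ hc; linear_combination (-(Cdc : ℂ)) * h4
  have F6 : (Tg : ℂ) * (μ * pp) = -kg * w1 - pp := by
    apply mul_left_cancel₀ htg; linear_combination (-(Tg : ℂ)) * h5
  have hkgc : (kg : ℂ) ≠ 0 := Complex.ofReal_ne_zero.mpr hkg.ne'
  have hbgc : (bg : ℂ) ≠ 0 := Complex.ofReal_ne_zero.mpr hbg.ne'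
  have hbmc : (bmsc : ℂ) ≠ 0 := Complex.ofReal_ne_zero.mpr hbmsc.ne'
  have hKtgc : (Kθg : ℂ) ≠ 0 := Complex.ofReal_ne_zero.mpr hKθg.ne'
  -- conjugated equations
  have G1 := congrArg (starRingEnd ℂ) F1
  have G2 := congrArg (starRingEnd ℂ) F2
  have G3 := congrArg (starRingEnd ℂ) F3
  have G4 := congrArg (starRingEnd ℂ) F4
  have G5 := congrArg (starRingEnd ℂ) F5
  have G6 := congrArg (starRingEnd ℂ) F6
  simp only [map_mul, map_add, map_sub, map_neg, Complex.conj_ofReal] at G1 G2 G3 G4 G5 G6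
  have hKKc : (Kdg : ℂ) * Kθm = (Kdm : ℂ) * Kθg := by exact_mod_cast congrArg Complex.ofReal hKK
  -- the Lyapunov identity
  have key : (μ + (starRingEnd ℂ) μ) *
      ((Kθm : ℂ) * kg * bg * Cdc * ((starRingEnd ℂ) r1 * r1)
        + (Kθg : ℂ) * kg * bmsc * Cdc * ((starRingEnd ℂ) r2 * r2)
        + (Cdc : ℂ) * Kθm * kg * Jg * ω0 * ((starRingEnd ℂ) w1 * w1)
        + (Cdc : ℂ) * Kθg * kg * Jwt * ωdel * ((starRingEnd ℂ) w2 * w2)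
        + (Cdc : ℂ) * Cdc * Kθg * Kθm * kg * ((starRingEnd ℂ) vv * vv)
        + (Cdc : ℂ) * Kθm * Tg * ((starRingEnd ℂ) pp * pp))
      = -2 * ((Kdg : ℂ) * Kθm * kg *
            (((bg : ℂ) * (starRingEnd ℂ) r1 + (bmsc : ℂ) * (starRingEnd ℂ) r2)
              * ((bg : ℂ) * r1 + (bmsc : ℂ) * r2))
          + (Cdc : ℂ) * Kθg * kg * κ * ((starRingEnd ℂ) w2 * w2)
          + (Cdc : ℂ) * Kθm * ((starRingEnd ℂ) pp * pp)) := by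
    linear_combination
      ((Kθm : ℂ) * kg * bg * (starRingEnd ℂ) r1) * F1
      + ((Kθg : ℂ) * kg * bmsc * (starRingEnd ℂ) r2) * F2
      + ((Cdc : ℂ) * Kθm * kg * (starRingEnd ℂ) w1) * F3
      + ((Cdc : ℂ) * Kθg * kg * (starRingEnd ℂ) w2) * F4
      + ((Cdc : ℂ) * Kθg * Kθm * kg * (starRingEnd ℂ) vv) * F5
      + ((Cdc : ℂ) * Kθm * (starRingEnd ℂ) pp) * F6
      + ((Kθm : ℂ) * kg * bg * r1) * G1
      + ((Kθg : ℂ) * kg * bmsc * r2) * G2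
      + ((Cdc : ℂ) * Kθm * kg * w1) * G3
      + ((Cdc : ℂ) * Kθg * kg * w2) * G4
      + ((Cdc : ℂ) * Kθg * Kθm * kg * vv) * G5
      + ((Cdc : ℂ) * Kθm * pp) * G6
      + ((kg : ℂ) * bmsc * ((starRingEnd ℂ) r2 * ((bg : ℂ) * r1 + (bmsc : ℂ) * r2)
          + r2 * ((bg : ℂ) * (starRingEnd ℂ) r1 + (bmsc : ℂ) * (starRingEnd ℂ) r2))) * hKKc
  -- rewrite conj-products as normSq
  set S : ℂ := (bg : ℂ) * r1 + (bmsc : ℂ) * r2 with hSdef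
  have nS : ((bg : ℂ) * (starRingEnd ℂ) r1 + (bmsc : ℂ) * (starRingEnd ℂ) r2)
      * ((bg : ℂ) * r1 + (bmsc : ℂ) * r2) = (Complex.normSq S : ℂ) := by
    rw [show ((bg : ℂ) * (starRingEnd ℂ) r1 + (bmsc : ℂ) * (starRingEnd ℂ) r2)
        = (starRingEnd ℂ) S by simp [hSdef, map_add, map_mul, Complex.conj_ofReal]]
    rw [mul_comm, Complex.mul_conj]
  have n1 : (starRingEnd ℂ) r1 * r1 = (Complex.normSq r1 : ℂ) := by
    rw [mul_comm, Complex.mul_conj]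
  have n2 : (starRingEnd ℂ) r2 * r2 = (Complex.normSq r2 : ℂ) := by
    rw [mul_comm, Complex.mul_conj]
  have n3 : (starRingEnd ℂ) w1 * w1 = (Complex.normSq w1 : ℂ) := by
    rw [mul_comm, Complex.mul_conj]
  have n4 : (starRingEnd ℂ) w2 * w2 = (Complex.normSq w2 : ℂ) := by
    rw [mul_comm, Complex.mul_conj]
  have n5 : (starRingEnd ℂ) vv * vv = (Complex.normSq vv : ℂ) := by
    rw [mul_comm, Complex.mul_conj]
  have n6 : (starRingEnd ℂ) pp * pp = (Complex.normSq pp : ℂ) := by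
    rw [mul_comm, Complex.mul_conj]
  rw [nS, n1, n2, n3, n4, n5, n6, Complex.add_conj] at key
  have keyR : (2 * μ.re) *
      (Kθm * kg * bg * Cdc * Complex.normSq r1
        + Kθg * kg * bmsc * Cdc * Complex.normSq r2
        + Cdc * Kθm * kg * Jg * ω0 * Complex.normSq w1
        + Cdc * Kθg * kg * Jwt * ωdel * Complex.normSq w2
        + Cdc * Cdc * Kθg * Kθm * kg * Complex.normSq vv
        + Cdc * Kθm * Tg * Complex.normSq pp)
      = -2 * (Kdg * Kθm * kg * Complex.normSq S
          + Cdc * Kθg * kg * κ * Complex.normSq w2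
          + Cdc * Kθm * Complex.normSq pp) := by
    exact_mod_cast key
  -- nonnegativity
  have q1 := Complex.normSq_nonneg r1
  have q2 := Complex.normSq_nonneg r2
  have q3 := Complex.normSq_nonneg w1
  have q4 := Complex.normSq_nonneg w2
  have q5 := Complex.normSq_nonneg vv
  have q6 := Complex.normSq_nonneg pp
  have qS := Complex.normSq_nonneg S
  by_contra hcon
  push_neg at hcon
  -- LHS is ≥ 0, RHS ≤ 0, hence both are 0
  have hVpos : ∃ i, x i ≠ 0 := by
    by_contra h
    push_neg at h
    exact hx0 (funext h)
  obtain ⟨i, hi⟩ := hVpos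
  -- derive that normSq S = 0 and normSq pp = 0
  have hVnn : (0:ℝ) ≤ Kθm * kg * bg * Cdc * Complex.normSq r1
        + Kθg * kg * bmsc * Cdc * Complex.normSq r2
        + Cdc * Kθm * kg * Jg * ω0 * Complex.normSq w1
        + Cdc * Kθg * kg * Jwt * ωdel * Complex.normSq w2
        + Cdc * Cdc * Kθg * Kθm * kg * Complex.normSq vv
        + Cdc * Kθm * Tg * Complex.normSq pp := by positivity
  have hLnn : (0:ℝ) ≤ (2 * μ.re) *
      (Kθm * kg * bg * Cdc * Complex.normSq r1
        + Kθg * kg * bmsc * Cdc * Complex.normSq r2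
        + Cdc * Kθm * kg * Jg * ω0 * Complex.normSq w1
        + Cdc * Kθg * kg * Jwt * ωdel * Complex.normSq w2
        + Cdc * Cdc * Kθg * Kθm * kg * Complex.normSq vv
        + Cdc * Kθm * Tg * Complex.normSq pp) :=
    mul_nonneg (by linarith) hVnn
  have t1 : (0:ℝ) ≤ Kdg * Kθm * kg * Complex.normSq S := by positivity
  have t2 : (0:ℝ) ≤ Cdc * Kθg * kg * κ * Complex.normSq w2 :=
    mul_nonneg (mul_nonneg (mul_nonneg (mul_nonneg hCdc.le hKθg.le) hkg.le) hκ) q4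
  have t3 : (0:ℝ) ≤ Cdc * Kθm * Complex.normSq pp := by positivity
  have e1 : Kdg * Kθm * kg * Complex.normSq S = 0 := le_antisymm (by linarith) t1
  have e3 : Cdc * Kθm * Complex.normSq pp = 0 := le_antisymm (by linarith) t3
  have hS0 : Complex.normSq S = 0 := by
    rcases mul_eq_zero.mp e1 with h | h
    · exact absurd h (by positivity)
    · exact h
  have hp0 : Complex.normSq pp = 0 := by
    rcases mul_eq_zero.mp e3 with h | h
    · exact absurd h (by positivity)
    · exact h
  have hSz : S = 0 := Complex.normSq_eq_zero.mp hS0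
  have hppz : pp = 0 := Complex.normSq_eq_zero.mp hp0
  -- now all components vanish
  have hw1z : w1 = 0 := by
    have h' : (kg : ℂ) * w1 = 0 := by
      rw [hppz] at F6; linear_combination F6
    exact (mul_eq_zero.mp h').resolve_left hkgc
  have hr1z : r1 = 0 := by
    have h' : (bg : ℂ) * r1 = 0 := by
      rw [hppz, hw1z] at F3; linear_combination -F3
    exact (mul_eq_zero.mp h').resolve_left hbgc
  have hr2z : r2 = 0 := by
    have h' : (bmsc : ℂ) * r2 = 0 := by
      rw [hSdef, hr1z] at hSz; linear_combination hSz
    exact (mul_eq_zero.mp h').resolve_left hbmc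
  have hvvz : vv = 0 := by
    have h' : (Cdc : ℂ) * ((Kθg : ℂ) * vv) = 0 := by
      rw [hr1z, hSz, hw1z] at F1; linear_combination -F1
    have h'' := (mul_eq_zero.mp h').resolve_left hc
    exact (mul_eq_zero.mp h'').resolve_left hKtgc
  have hw2z : w2 = 0 := by
    have h' : (Cdc : ℂ) * w2 = 0 := by
      rw [hr2z, hSz, hvvz] at F2; linear_combination F2
    exact (mul_eq_zero.mp h').resolve_left hc
  fin_cases i
  · exact hi hr1z
  · exact hi hr2z
  · exact hi hw1z
  · exact hi hw2z
  · exact hi hvvz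
  · exact hi hppz
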